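/- Every agent-alternating formula satisfiable in some Kripke model is satisfiable in a Kripke model all of whose accessibility relations are symmetric; in particular, one can take the agent-alternating unraveling in which R_a(s) = {s with last element removed} whenever the sequence s ends with a pair for agent a. Consequently, K and KB (resp. KD and KDB) prove the same agent-alternating formulas. -/

import Mathlib

/-- Formulas of the multi-agent modal language: p | ¬φ | (φ ∧ φ) | □_a φ. -/
inductive Fm (A : Type) : Type
  | atom : ℕ → Fm A
  | neg : Fm A → Fm A
  | and : Fm A → Fm A → Fm A
  | box : A → Fm A → Fm A

namespace Fm
def imp {A : Type} (φ ψ : Fm A) : Fm A := .neg (.and φ (.neg ψ))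
def or {A : Type} (φ ψ : Fm A) : Fm A := .neg (.and (.neg φ) (.neg ψ))
def dia {A : Type} (a : A) (φ : Fm A) : Fm A := .neg (.box a (.neg φ))
end Fm

/-- Kripke models with agent set `A` and world type `W`. -/
structure Kripke (A W : Type) where
  R : A → W → W → Prop
  V : ℕ → W → Prop

/-- Satisfaction. -/
def Sat {A W : Type} (M : Kripke A W) : W → Fm A → Prop
  | w, .atom n => M.V n w
  | w, .neg φ => ¬ Sat M w φ
  | w, .and φ ψ => Sat M w φ ∧ Sat M w ψ
  | w, .box a φ => ∀ v, M.R a w v → Sat M v φ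

/-- The fragments L_{-a}: φ ::= p | □_x ψ (x ≠ a, ψ ∈ L_{-x}) | ¬φ | (φ ∧ φ). -/
inductive LMinus {A : Type} : A → Fm A → Prop
  | atom (a : A) (n : ℕ) : LMinus a (.atom n)
  | box {a x : A} {ψ : Fm A} : x ≠ a → LMinus x ψ → LMinus a (.box x ψ)
  | neg {a : A} {φ : Fm A} : LMinus a φ → LMinus a (.neg φ)
  | and {a : A} {φ ψ : Fm A} : LMinus a φ → LMinus a ψ → LMinus a (.and φ ψ)

/-- The agent-alternating fragment L_alt. -/
inductive LAlt {A : Type} : Fm A → Prop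
  | atom (n : ℕ) : LAlt (.atom n)
  | chi {φ : Fm A} (a : A) : LMinus a φ → LAlt φ
  | neg {φ : Fm A} : LAlt φ → LAlt (.neg φ)
  | and {φ ψ : Fm A} : LAlt φ → LAlt ψ → LAlt (.and φ ψ)

/-- The fragments L_X for X ⊆ A: φ ::= p | □_x ψ (x ∈ X, ψ ∈ L_{X\{x}}) | ¬φ | (φ ∧ φ). -/
inductive LX {A : Type} : Set A → Fm A → Prop
  | atom (X : Set A) (n : ℕ) : LX X (.atom n)
  | box {X : Set A} {x : A} {ψ : Fm A} : x ∈ X → LX (X \ {x}) ψ → LX X (.box x ψ)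
  | neg {X : Set A} {φ : Fm A} : LX X φ → LX X (.neg φ)
  | and {X : Set A} {φ ψ : Fm A} : LX X φ → LX X ψ → LX X (.and φ ψ)

/-- Immediate subformula relation. -/
inductive ISub {A : Type} : Fm A → Fm A → Prop
  | neg (φ : Fm A) : ISub φ (.neg φ)
  | andL (φ ψ : Fm A) : ISub φ (.and φ ψ)
  | andR (φ ψ : Fm A) : ISub ψ (.and φ ψ)
  | box (a : A) (φ : Fm A) : ISub φ (.box a φ)

/-- An occurrence type of φ: a nonempty sequence of formulas, each an immediate
subformula of the next, ending in φ. -/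
def IsOcc {A : Type} (l : List (Fm A)) (φ : Fm A) : Prop :=
  l ≠ [] ∧ l.getLast? = some φ ∧ List.Chain' ISub l

/-- A □_a-occurrence of φ. -/
def IsBoxOcc {A : Type} (a : A) (l : List (Fm A)) (φ : Fm A) : Prop :=
  IsOcc l φ ∧ ∃ β, l.head? = some (Fm.box a β)

/-- O ≤ O' iff O' is a suffix of O (prefix-extension order on occurrences). -/
def OccLe {A : Type} (O O' : List (Fm A)) : Prop := O' <:+ O

/-- φ is agent-alternating: between any two nested □_a-occurrences there is a
□_b-occurrence for some b ≠ a. -/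
def AgentAlternating {A : Type} (φ : Fm A) : Prop :=
  ∀ (a : A) (O O' : List (Fm A)), IsBoxOcc a O φ → IsBoxOcc a O' φ → O ≠ O' → OccLe O O' →
    ∃ b : A, b ≠ a ∧ ∃ O'' : List (Fm A), IsBoxOcc b O'' φ ∧ OccLe O O'' ∧ OccLe O'' O'

/-- φ is agent-nonrepeating: no □_a-occurrence lies below another □_a-occurrence. -/
def AgentNonrepeating {A : Type} (φ : Fm A) : Prop :=
  ∀ (a : A) (O O' : List (Fm A)), IsBoxOcc a O φ → IsBoxOcc a O' φ → O ≠ O' → ¬ OccLe O O'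

/-- Boolean evaluation treating atoms and boxed formulas as atomic. -/
def evalP {A : Type} (v : Fm A → Bool) : Fm A → Bool
  | .neg φ => ! evalP v φ
  | .and φ ψ => evalP v φ && evalP v ψ
  | φ => v φ

/-- Propositional tautologies (in the signature ¬, ∧, with boxed formulas atomic). -/
def Taut {A : Type} (φ : Fm A) : Prop := ∀ v : Fm A → Bool, evalP v φ = true

/-- Provability in the smallest normal modal logic containing the axioms `Ax`. -/
inductive Prv {A : Type} (Ax : Fm A → Prop) : Fm A → Prop
  | taut {φ : Fm A} : Taut φ → Prv Ax φ
  | ax {φ : Fm A} : Ax φ → Prv Ax φ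
  | k (a : A) (φ ψ : Fm A) :
      Prv Ax (Fm.imp (.box a (Fm.imp φ ψ)) (Fm.imp (.box a φ) (.box a ψ)))
  | mp {φ ψ : Fm A} : Prv Ax (Fm.imp φ ψ) → Prv Ax φ → Prv Ax ψ
  | nec {φ : Fm A} (a : A) : Prv Ax φ → Prv Ax (.box a φ)

def AxNone {A : Type} : Fm A → Prop := fun _ => False
def AxT {A : Type} : Fm A → Prop := fun χ => ∃ (a : A) (φ : Fm A), χ = Fm.imp (.box a φ) φ
def Ax4 {A : Type} : Fm A → Prop := fun χ => ∃ (a : A) (φ : Fm A), χ = Fm.imp (.box a φ) (.box a (.box a φ))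
def Ax5 {A : Type} : Fm A → Prop := fun χ => ∃ (a : A) (φ : Fm A), χ = Fm.imp (.neg (.box a φ)) (.box a (.neg (.box a φ)))
def AxB {A : Type} : Fm A → Prop := fun χ => ∃ (a : A) (φ : Fm A), χ = Fm.imp φ (.box a (Fm.dia a φ))
def AxD {A : Type} : Fm A → Prop := fun χ => ∃ (a : A) (φ : Fm A), χ = Fm.imp (.box a φ) (Fm.dia a φ)

def Ser {W : Type} (R : W → W → Prop) : Prop := ∀ u, ∃ v, R u v
def Eucl {W : Type} (R : W → W → Prop) : Prop := ∀ u v w, R u v → R u w → R v w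

/-- Agent-alternating bisimulation family (`none` plays the role of `alt`). -/
def IsAAFamily {A W1 W2 : Type} (M : Kripke A W1) (N : Kripke A W2)
    (f : Option A → W1 → W2 → Prop) : Prop :=
  ∀ (o : Option A) (u : W1) (v : W2), f o u v →
    (∀ n, M.V n u ↔ N.V n v) ∧
    (∀ b : A, o ≠ some b →
      (∀ u', M.R b u u' → ∃ v', N.R b v v' ∧ f (some b) u' v') ∧
      (∀ v', N.R b v v' → ∃ u', M.R b u u' ∧ f (some b) u' v'))

/-- Agent-nonrepeating bisimulation family. -/
def IsNRFamily {A W1 W2 : Type} (M : Kripke A W1) (N : Kripke A W2)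
    (f : Set A → W1 → W2 → Prop) : Prop :=
  ∀ (X : Set A) (u : W1) (v : W2), f X u v →
    (∀ n, M.V n u ↔ N.V n v) ∧
    (∀ x ∈ X,
      (∀ u', M.R x u u' → ∃ v', N.R x v v' ∧ f (X \ {x}) u' v') ∧
      (∀ v', N.R x v v' → ∃ u', M.R x u u' ∧ f (X \ {x}) u' v'))

/-- One step in an agent-alternating sequence. -/
def Step {A W : Type} (M : Kripke A W) : (Option A × W) → (Option A × W) → Prop :=
  fun x y => x.1 ≠ y.1 ∧ ∃ b : A, y.1 = some b ∧ M.R b x.2 y.2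

/-- Valid worlds of an agent-alternating unraveling. -/
def ValidSeq {A W : Type} (M : Kripke A W) (s : List (Option A × W)) : Prop :=
  s ≠ [] ∧ (∃ w, s.head? = some (none, w)) ∧ (∀ x ∈ s.tail, x.1 ≠ none) ∧
    List.Chain' (Step M) s

def UWorld {A W : Type} (M : Kripke A W) : Type := {s : List (Option A × W) // ValidSeq M s}

def lastEntry {A W : Type} {M : Kripke A W} (s : UWorld M) : Option A × W :=
  s.val.getLast s.prop.1

/-- N is an agent-alternating unraveling of M. -/
def IsAAUnraveling {A W : Type} (M : Kripke A W) (N : Kripke A (UWorld M)) : Prop :=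
  (∀ (b : A) (s : UWorld M), (lastEntry s).1 ≠ some b →
    ∀ t : UWorld M, N.R b s t ↔ ∃ w', M.R b (lastEntry s).2 w' ∧ t.val = s.val ++ [(some b, w')])
  ∧ (∀ n (s : UWorld M), N.V n s ↔ M.V n (lastEntry s).2)

/-- The canonical relation family between M and any of its agent-alternating unravelings. -/
def PFam {A W : Type} (M : Kripke A W) : Option A → W → UWorld M → Prop :=
  fun o u s => lastEntry s = (o, u)

/-- Finite agent-alternating bisimulation relations: `BisimN M N n (some a)` is ⇆_{-a}^n,
`BisimN M N n none` is ⇆_alt^n. -/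
def BisimN {A W1 W2 : Type} (M : Kripke A W1) (N : Kripke A W2) :
    ℕ → Option A → W1 → W2 → Prop
  | 0, _, u, v => ∀ n, M.V n u ↔ N.V n v
  | (n+1), o, u, v => (∀ m, M.V m u ↔ N.V m v) ∧
      ∀ b : A, o ≠ some b →
        (∀ u', M.R b u u' → ∃ v', N.R b v v' ∧ BisimN M N n (some b) u' v') ∧
        (∀ v', N.R b v v' → ∃ u', M.R b u u' ∧ BisimN M N n (some b) u' v')

/-- Standard n-bisimilarity. -/
def StdBisimN {A W1 W2 : Type} (M : Kripke A W1) (N : Kripke A W2) :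
    ℕ → W1 → W2 → Prop
  | 0, u, v => ∀ n, M.V n u ↔ N.V n v
  | (n+1), u, v => (∀ m, M.V m u ↔ N.V m v) ∧
      ∀ b : A,
        (∀ u', M.R b u u' → ∃ v', N.R b v v' ∧ StdBisimN M N n u' v') ∧
        (∀ v', N.R b v v' → ∃ u', M.R b u u' ∧ StdBisimN M N n u' v')

namespace S4x
open Fm

variable {A : Type} {Ax : Fm A → Prop}

@[simp] lemma evalP_neg (v : Fm A → Bool) (φ : Fm A) : evalP v (.neg φ) = ! evalP v φ := rfl
@[simp] lemma evalP_and (v : Fm A → Bool) (φ ψ : Fm A) :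
    evalP v (.and φ ψ) = (evalP v φ && evalP v ψ) := rfl
@[simp] lemma evalP_imp (v : Fm A → Bool) (φ ψ : Fm A) :
    evalP v (Fm.imp φ ψ) = (! (evalP v φ && ! evalP v ψ)) := rfl

def Top : Fm A := Fm.imp (.atom 0) (.atom 0)

@[simp] lemma evalP_Top (v : Fm A → Bool) : evalP v (Top : Fm A) = true := by
  simp only [Top, evalP_imp]; cases evalP v (Fm.atom 0) <;> rfl

def conj : List (Fm A) → Fm A
  | [] => Top
  | φ :: l => .and φ (conj l)

lemma P1 {φ ψ : Fm A} (t : Taut (Fm.imp φ ψ)) (h : Prv Ax φ) : Prv Ax ψ :=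
  (Prv.taut t).mp h

lemma P2 {φ ψ χ : Fm A} (t : Taut (Fm.imp φ (Fm.imp ψ χ))) (h1 : Prv Ax φ)
    (h2 : Prv Ax ψ) : Prv Ax χ := ((Prv.taut t).mp h1).mp h2

lemma impTrans {φ ψ χ : Fm A} (h1 : Prv Ax (Fm.imp φ ψ)) (h2 : Prv Ax (Fm.imp ψ χ)) :
    Prv Ax (Fm.imp φ χ) := by
  refine P2 ?_ h1 h2
  intro v; simp only [evalP_imp]
  cases evalP v φ <;> cases evalP v ψ <;> cases evalP v χ <;> rfl

lemma conj_elem {l : List (Fm A)} {ψ : Fm A} (h : ψ ∈ l) : Prv Ax (Fm.imp (conj l) ψ) := by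
  induction l with
  | nil => cases h
  | cons φ l ih =>
    rcases List.mem_cons.1 h with rfl | h
    · refine Prv.taut ?_; intro v; simp only [evalP_imp, conj, evalP_and]
      cases evalP v ψ <;> cases evalP v (conj l) <;> rfl
    · refine impTrans (ψ := conj l) ?_ (ih h)
      refine Prv.taut ?_; intro v; simp only [evalP_imp, conj, evalP_and]
      cases evalP v φ <;> cases evalP v (conj l) <;> rfl

lemma imp_and_intro {γ α β : Fm A} (h1 : Prv Ax (Fm.imp γ α)) (h2 : Prv Ax (Fm.imp γ β)) :
    Prv Ax (Fm.imp γ (.and α β)) := by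
  refine P2 ?_ h1 h2
  intro v; simp only [evalP_imp, evalP_and]
  cases evalP v γ <;> cases evalP v α <;> cases evalP v β <;> rfl

lemma conj_mono {l l' : List (Fm A)} (h : ∀ ψ ∈ l, ψ ∈ l') :
    Prv Ax (Fm.imp (conj l') (conj l)) := by
  induction l with
  | nil =>
    refine Prv.taut ?_; intro v; simp only [evalP_imp, conj, evalP_Top]
    cases evalP v (conj l') <;> rfl
  | cons φ l ih =>
    exact imp_and_intro (conj_elem (h φ (List.mem_cons_self)))
      (ih fun ψ hm => h ψ (List.mem_cons_of_mem _ hm))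

lemma prv_imp_conj_insert {l l' : List (Fm A)} {φ : Fm A}
    (h : ∀ ψ ∈ l', ψ = φ ∨ ψ ∈ l) :
    Prv Ax (Fm.imp (.and φ (conj l)) (conj l')) := by
  induction l' with
  | nil =>
    refine Prv.taut ?_; intro v; simp only [evalP_imp, conj, evalP_Top, evalP_and]
    cases (evalP v φ && evalP v (conj l)) <;> rfl
  | cons ψ l'' ih =>
    refine imp_and_intro ?_ (ih fun χ hm => h χ (List.mem_cons_of_mem _ hm))
    rcases h ψ (List.mem_cons_self) with rfl | hm
    · refine Prv.taut ?_; intro v; simp only [evalP_imp, evalP_and]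
      cases evalP v ψ <;> cases evalP v (conj l) <;> rfl
    · refine impTrans (ψ := conj l) ?_ (conj_elem hm)
      refine Prv.taut ?_; intro v; simp only [evalP_imp, evalP_and]
      cases evalP v φ <;> cases evalP v (conj l) <;> rfl

end S4x
namespace S4x
variable {A : Type} {Ax : Fm A → Prop}

def Con (Ax : Fm A → Prop) (Γ : Set (Fm A)) : Prop :=
  ∀ l : List (Fm A), (∀ ψ ∈ l, ψ ∈ Γ) → ¬ Prv Ax (.neg (conj l))

def MCSet (Ax : Fm A → Prop) (Γ : Set (Fm A)) : Prop :=
  Con Ax Γ ∧ ∀ φ, φ ∈ Γ ∨ Fm.neg φ ∈ Γ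

lemma not_con_insert {Γ : Set (Fm A)} {φ : Fm A} (h : ¬ Con Ax (insert φ Γ)) :
    ∃ l, (∀ ψ ∈ l, ψ ∈ Γ) ∧ Prv Ax (Fm.imp (conj l) (.neg φ)) := by
  classical
  simp only [Con, not_forall, not_not] at h
  obtain ⟨l', hsub, hprv⟩ := h
  refine ⟨l'.filter (fun ψ => ψ ∈ Γ), ?_, ?_⟩
  · intro ψ hm; exact of_decide_eq_true (List.mem_filter.1 hm).2
  · have h1 : Prv Ax (Fm.imp (.and φ (conj (l'.filter (fun ψ => ψ ∈ Γ)))) (conj l')) := by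
      refine prv_imp_conj_insert fun ψ hm => ?_
      rcases hsub ψ hm with rfl | hψ
      · exact Or.inl rfl
      · exact Or.inr (List.mem_filter.2 ⟨hm, decide_eq_true hψ⟩)
    refine P2 ?_ h1 hprv
    intro v
    simp only [evalP_imp, evalP_and, evalP_neg]
    cases evalP v φ <;> cases evalP v (conj (l'.filter (fun ψ => ψ ∈ Γ))) <;>
      cases evalP v (conj l') <;> rfl

lemma con_pair_false {Γ : Set (Fm A)} {φ : Fm A} (hc : Con Ax Γ)
    (h1 : φ ∈ Γ) (h2 : Fm.neg φ ∈ Γ) : False := by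
  refine hc [φ, .neg φ] ?_ ?_
  · intro ψ hm
    rcases List.mem_cons.1 hm with rfl | hm
    · exact h1
    · rcases List.mem_cons.1 hm with rfl | hm
      · exact h2
      · cases hm
  · refine Prv.taut ?_; intro v
    simp only [conj, evalP_and, evalP_neg, evalP_Top]
    cases evalP v φ <;> rfl

lemma lindenbaum {Γ : Set (Fm A)} (hc : Con Ax Γ) :
    ∃ Δ : Set (Fm A), Γ ⊆ Δ ∧ MCSet Ax Δ := by
  classical
  have H : ∀ c ⊆ {Δ | Con Ax Δ}, IsChain (· ⊆ ·) c → c.Nonempty →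
      ∃ ub ∈ {Δ | Con Ax Δ}, ∀ s ∈ c, s ⊆ ub := by
    intro c hcS hchain hne
    refine ⟨⋃₀ c, ?_, fun s hs => Set.subset_sUnion_of_mem hs⟩
    intro l hl hprv
    have hex : ∀ l' : List (Fm A), (∀ ψ ∈ l', ψ ∈ ⋃₀ c) → ∃ Δ ∈ c, ∀ ψ ∈ l', ψ ∈ Δ := by
      intro l' hl'
      clear hprv hl
      induction l' with
      | nil => obtain ⟨Δ, hΔ⟩ := hne; exact ⟨Δ, hΔ, by simp⟩
      | cons ψ l ih =>
        obtain ⟨Δ, hΔc, hΔ⟩ := ih (fun χ hχ => hl' χ (List.mem_cons_of_mem _ hχ))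
        obtain ⟨Δ', hΔ'c, hψ⟩ := hl' ψ (List.mem_cons_self)
        rcases eq_or_ne Δ Δ' with rfl | hne'
        · exact ⟨Δ, hΔc, fun χ hχ => by
            rcases List.mem_cons.1 hχ with rfl | h; exacts [hψ, hΔ χ h]⟩
        rcases hchain hΔc hΔ'c hne' with h | h
        · exact ⟨Δ', hΔ'c, fun χ hχ => by
            rcases List.mem_cons.1 hχ with rfl | hh; exacts [hψ, h (hΔ χ hh)]⟩
        · exact ⟨Δ, hΔc, fun χ hχ => by
            rcases List.mem_cons.1 hχ with rfl | hh; exacts [h hψ, hΔ χ hh]⟩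
    obtain ⟨Δ, hΔc, hall⟩ := hex l hl
    exact hcS hΔc l hall hprv
  obtain ⟨m, hΓm, hmMax⟩ := zorn_subset_nonempty {Δ | Con Ax Δ} H Γ hc
  · have hm : Con Ax m := hmMax.1
    refine ⟨m, hΓm, hm, fun φ => ?_⟩
    by_cases h1 : Con Ax (insert φ m)
    · exact Or.inl (hmMax.2 h1 (Set.subset_insert _ _) (Set.mem_insert _ _))
    by_cases h2 : Con Ax (insert (Fm.neg φ) m)
    · exact Or.inr (hmMax.2 h2 (Set.subset_insert _ _) (Set.mem_insert _ _))
    exfalso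
    obtain ⟨l₁, hl₁, hp₁⟩ := not_con_insert h1
    obtain ⟨l₂, hl₂, hp₂⟩ := not_con_insert h2
    refine hm (l₁ ++ l₂) (fun ψ hψ => ?_) ?_
    · rcases List.mem_append.1 hψ with h | h
      · exact hl₁ ψ h
      · exact hl₂ ψ h
    · have e₁ : Prv Ax (Fm.imp (conj (l₁ ++ l₂)) (.neg φ)) :=
        impTrans (conj_mono fun ψ h => List.mem_append_left _ h) hp₁
      have e₂ : Prv Ax (Fm.imp (conj (l₁ ++ l₂)) (.neg (.neg φ))) :=
        impTrans (conj_mono fun ψ h => List.mem_append_right _ h) hp₂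
      refine P2 ?_ e₁ e₂
      intro v
      simp only [evalP_imp, evalP_neg]
      cases evalP v (conj (l₁ ++ l₂)) <;> cases evalP v φ <;> rfl

lemma mem_of_prv_imp {Γ : Set (Fm A)} (hm : MCSet Ax Γ) {l : List (Fm A)} {φ : Fm A}
    (hl : ∀ ψ ∈ l, ψ ∈ Γ) (h : Prv Ax (Fm.imp (conj l) φ)) : φ ∈ Γ := by
  rcases hm.2 φ with hφ | hn
  · exact hφ
  exfalso
  refine hm.1 (Fm.neg φ :: l) (fun ψ hψ => ?_) ?_
  · rcases List.mem_cons.1 hψ with rfl | hh; exacts [hn, hl ψ hh]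
  · refine P1 ?_ h
    intro v
    simp only [conj, evalP_imp, evalP_neg, evalP_and]
    cases evalP v (conj l) <;> cases evalP v φ <;> rfl

lemma mem_of_prv {Γ : Set (Fm A)} (hm : MCSet Ax Γ) {φ : Fm A} (h : Prv Ax φ) : φ ∈ Γ := by
  refine mem_of_prv_imp hm (l := []) (by simp) (P1 ?_ h)
  intro v
  simp only [conj, evalP_imp, evalP_Top]
  cases evalP v φ <;> rfl

lemma neg_mem_iff {Γ : Set (Fm A)} (hm : MCSet Ax Γ) {φ : Fm A} :
    Fm.neg φ ∈ Γ ↔ φ ∉ Γ := by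
  constructor
  · intro h hφ; exact con_pair_false hm.1 hφ h
  · intro h; rcases hm.2 φ with hφ | hn; exacts [absurd hφ h, hn]

lemma and_mem_iff {Γ : Set (Fm A)} (hm : MCSet Ax Γ) {φ ψ : Fm A} :
    Fm.and φ ψ ∈ Γ ↔ φ ∈ Γ ∧ ψ ∈ Γ := by
  constructor
  · intro h
    constructor <;>
    · refine mem_of_prv_imp hm (l := [Fm.and φ ψ]) (by simpa using h) (Prv.taut ?_)
      intro v
      simp only [conj, evalP_imp, evalP_and, evalP_Top]
      cases evalP v φ <;> cases evalP v ψ <;> rfl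
  · rintro ⟨h1, h2⟩
    refine mem_of_prv_imp hm (l := [φ, ψ]) ?_ (Prv.taut ?_)
    · intro χ hχ
      rcases List.mem_cons.1 hχ with rfl | hχ
      · exact h1
      · rcases List.mem_cons.1 hχ with rfl | hχ
        · exact h2
        · cases hχ
    · intro v
      simp only [conj, evalP_imp, evalP_and, evalP_Top]
      cases evalP v φ <;> cases evalP v ψ <;> rfl

lemma boxImp {φ ψ : Fm A} (a : A) (h : Prv Ax (Fm.imp φ ψ)) :
    Prv Ax (Fm.imp (.box a φ) (.box a ψ)) := (Prv.k a φ ψ).mp (h.nec a)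

lemma conj_boxes (a : A) (l : List (Fm A)) :
    Prv Ax (Fm.imp (conj (l.map (Fm.box a))) (.box a (conj l))) := by
  induction l with
  | nil =>
    have hb : Prv Ax (Fm.box a (Top : Fm A)) := Prv.nec a (Prv.taut (by intro v; simp))
    refine P1 ?_ hb
    intro v
    simp only [List.map_nil, conj, evalP_imp, evalP_Top]
    cases evalP v (Fm.box a (Top : Fm A)) <;> rfl
  | cons φ l ih =>
    have t : Prv Ax (Fm.imp φ (Fm.imp (conj l) (.and φ (conj l)))) := by
      refine Prv.taut ?_; intro v
      simp only [evalP_imp, evalP_and]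
      cases evalP v φ <;> cases evalP v (conj l) <;> rfl
    have h1 : Prv Ax (Fm.imp (.box a φ) (.box a (Fm.imp (conj l) (.and φ (conj l))))) :=
      boxImp a t
    have h2 : Prv Ax (Fm.imp (.box a φ) (Fm.imp (.box a (conj l)) (.box a (.and φ (conj l))))) :=
      impTrans h1 (Prv.k a _ _)
    show Prv Ax (Fm.imp (.and (.box a φ) (conj (l.map (Fm.box a)))) (.box a (.and φ (conj l))))
    refine P2 ?_ h2 ih
    intro v
    simp only [evalP_imp, evalP_and]
    cases evalP v (Fm.box a φ) <;> cases evalP v (conj (l.map (Fm.box a))) <;>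
      cases evalP v (Fm.box a (conj l)) <;> cases evalP v (Fm.box a (.and φ (conj l))) <;> rfl

lemma box_reg {l : List (Fm A)} {φ : Fm A} (a : A) (h : Prv Ax (Fm.imp (conj l) φ)) :
    Prv Ax (Fm.imp (conj (l.map (Fm.box a))) (.box a φ)) :=
  impTrans (conj_boxes a l) (boxImp a h)

end S4x
namespace S4x
variable {A : Type}

def CW (Ax : Fm A → Prop) := {Γ : Set (Fm A) // MCSet Ax Γ}

def CanM (Ax : Fm A → Prop) : Kripke A (CW Ax) where
  R a Γ Δ := ∀ φ, Fm.box a φ ∈ Γ.val → φ ∈ Δ.val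
  V n Γ := Fm.atom n ∈ Γ.val

variable {Ax : Fm A → Prop}

lemma canR_ex (Γ : CW Ax) (a : A) (φ : Fm A) (h : Fm.box a φ ∉ Γ.val) :
    ∃ Δ : CW Ax, (CanM Ax).R a Γ Δ ∧ φ ∉ Δ.val := by
  classical
  have hS : Con Ax (insert (Fm.neg φ) {ψ | Fm.box a ψ ∈ Γ.val}) := by
    by_contra hnc
    obtain ⟨l, hl, hp⟩ := not_con_insert hnc
    have hp' : Prv Ax (Fm.imp (conj l) φ) := by
      refine impTrans hp (Prv.taut ?_)
      intro v; simp only [evalP_imp, evalP_neg]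
      cases evalP v φ <;> rfl
    have hb : Prv Ax (Fm.imp (conj (l.map (Fm.box a))) (.box a φ)) := box_reg a hp'
    exact h (mem_of_prv_imp Γ.prop (l := l.map (Fm.box a))
      (by intro ψ hψ; obtain ⟨χ, hχ, rfl⟩ := List.mem_map.1 hψ; exact hl χ hχ) hb)
  obtain ⟨Δ, hSΔ, hΔ⟩ := lindenbaum hS
  refine ⟨⟨Δ, hΔ⟩, fun ψ hψ => hSΔ (Set.mem_insert_of_mem _ hψ), ?_⟩
  exact (neg_mem_iff hΔ).1 (hSΔ (Set.mem_insert _ _))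

lemma truth_lemma (φ : Fm A) : ∀ Γ : CW Ax, Sat (CanM Ax) Γ φ ↔ φ ∈ Γ.val := by
  induction φ with
  | atom n => intro Γ; exact Iff.rfl
  | neg φ ih =>
    intro Γ
    show (¬ Sat (CanM Ax) Γ φ) ↔ _
    rw [ih Γ, ← neg_mem_iff Γ.prop]
  | and φ ψ ihφ ihψ =>
    intro Γ
    show (Sat (CanM Ax) Γ φ ∧ Sat (CanM Ax) Γ ψ) ↔ _
    rw [ihφ Γ, ihψ Γ, and_mem_iff Γ.prop]
  | box a φ ih =>
    intro Γ
    constructor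
    · intro hs
      by_contra hn
      obtain ⟨Δ, hR, hφ⟩ := canR_ex Γ a φ hn
      exact hφ ((ih Δ).1 (hs Δ hR))
    · intro hmem Δ hR
      exact (ih Δ).2 (hR φ hmem)

lemma exists_countermodel {φ : Fm A} (h : ¬ Prv Ax φ) :
    ∃ Γ : CW Ax, ¬ Sat (CanM Ax) Γ φ := by
  have hc : Con Ax {Fm.neg φ} := by
    intro l hl hp
    have h1 : Prv Ax (Fm.imp (conj [Fm.neg φ]) (conj l)) :=
      conj_mono fun ψ hψ => by simpa using hl ψ hψ
    have h2 : Prv Ax (Fm.neg (conj [Fm.neg φ])) := by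
      refine P2 ?_ h1 hp
      intro v; simp only [evalP_imp, evalP_neg]
      cases evalP v (conj [Fm.neg φ]) <;> cases evalP v (conj l) <;> rfl
    refine h (P1 ?_ h2)
    intro v; simp only [conj, evalP_imp, evalP_neg, evalP_and, evalP_Top]
    cases evalP v φ <;> rfl
  obtain ⟨Δ, hSΔ, hΔ⟩ := lindenbaum hc
  refine ⟨⟨Δ, hΔ⟩, ?_⟩
  have : Sat (CanM Ax) ⟨Δ, hΔ⟩ (Fm.neg φ) := (truth_lemma (Fm.neg φ) _).2 (hSΔ rfl)
  exact this

lemma canM_serial (hd : ∀ χ, AxD χ → Ax χ) (a : A) : Ser ((CanM Ax).R a) := by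
  intro Γ
  have hS : Con Ax {ψ | Fm.box a ψ ∈ Γ.val} := by
    intro l hl hp
    have h1 : Prv Ax (Fm.imp (conj l) (Fm.neg (Top : Fm A))) := by
      refine P1 ?_ hp
      intro v; simp only [evalP_imp, evalP_neg, evalP_Top]
      cases evalP v (conj l) <;> rfl
    have hb : Prv Ax (Fm.imp (conj (l.map (Fm.box a))) (.box a (Fm.neg (Top : Fm A)))) :=
      box_reg a h1
    have hmem1 : Fm.box a (Fm.neg (Top : Fm A)) ∈ Γ.val :=
      mem_of_prv_imp Γ.prop (l := l.map (Fm.box a))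
        (by intro ψ hψ; obtain ⟨χ, hχ, rfl⟩ := List.mem_map.1 hψ; exact hl χ hχ) hb
    have htop : Prv Ax (Fm.box a (Top : Fm A)) := Prv.nec a (Prv.taut (by intro v; simp))
    have hbb : Prv Ax (Fm.box a (Fm.neg (Fm.neg (Top : Fm A)))) :=
      (boxImp (Ax := Ax) a (φ := (Top : Fm A)) (ψ := Fm.neg (Fm.neg Top))
        (Prv.taut (by intro v; simp only [evalP_imp, evalP_neg, evalP_Top]; rfl))).mp htop
    have hmem2 : Fm.box a (Fm.neg (Fm.neg (Top : Fm A))) ∈ Γ.val := mem_of_prv Γ.prop hbb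
    have hD : Prv Ax (Fm.imp (Fm.box a (Fm.neg (Top : Fm A)))
        (Fm.dia a (Fm.neg (Top : Fm A)))) := Prv.ax (hd _ ⟨a, Fm.neg Top, rfl⟩)
    have hmem3 : Fm.neg (Fm.box a (Fm.neg (Fm.neg (Top : Fm A)))) ∈ Γ.val := by
      refine mem_of_prv_imp Γ.prop (l := [Fm.box a (Fm.neg (Top : Fm A))])
        (by intro ψ hψ; simp at hψ; subst hψ; exact hmem1) ?_
      refine P1 ?_ hD
      intro v
      simp only [Fm.dia, conj, evalP_imp, evalP_and, evalP_neg, evalP_Top]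
      cases evalP v (Fm.box a (Fm.neg (Top : Fm A))) <;>
        cases evalP v (Fm.box a (Fm.neg (Fm.neg (Top : Fm A)))) <;> rfl
    exact con_pair_false Γ.prop.1 hmem2 hmem3
  obtain ⟨Δ, hSΔ, hΔ⟩ := lindenbaum hS
  exact ⟨⟨Δ, hΔ⟩, fun ψ hψ => hSΔ hψ⟩

end S4x
namespace S4x
variable {A W : Type} {Ax : Fm A → Prop}

@[simp] lemma sat_neg (M : Kripke A W) (w : W) (φ : Fm A) :
    Sat M w (.neg φ) ↔ ¬ Sat M w φ := Iff.rfl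
@[simp] lemma sat_and (M : Kripke A W) (w : W) (φ ψ : Fm A) :
    Sat M w (.and φ ψ) ↔ Sat M w φ ∧ Sat M w ψ := Iff.rfl
@[simp] lemma sat_box (M : Kripke A W) (w : W) (a : A) (φ : Fm A) :
    Sat M w (.box a φ) ↔ ∀ v, M.R a w v → Sat M v φ := Iff.rfl
lemma sat_imp (M : Kripke A W) (w : W) (φ ψ : Fm A) :
    Sat M w (Fm.imp φ ψ) ↔ (Sat M w φ → Sat M w ψ) := by
  simp [Fm.imp]
lemma sat_dia (M : Kripke A W) (w : W) (a : A) (φ : Fm A) :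
    Sat M w (Fm.dia a φ) ↔ ∃ v, M.R a w v ∧ Sat M v φ := by
  simp [Fm.dia]

lemma sat_of_taut (M : Kripke A W) (w : W) {φ : Fm A} (h : Taut φ) : Sat M w φ := by
  classical
  let v : Fm A → Bool := fun ψ => decide (Sat M w ψ)
  have key : ∀ ψ : Fm A, evalP v ψ = true ↔ Sat M w ψ := by
    intro ψ
    induction ψ with
    | atom n => exact decide_eq_true_iff
    | neg ψ ih => simp only [evalP_neg, Bool.not_eq_true', sat_neg, ← ih]; simp
    | and ψ χ ih1 ih2 => simp [evalP_and, ih1, ih2]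
    | box a ψ ih =>
      show v (Fm.box a ψ) = true ↔ _
      exact decide_eq_true_iff
  exact (key φ).1 (h v)

lemma soundness (M : Kripke A W) (hax : ∀ χ, Ax χ → ∀ w, Sat M w χ) {φ : Fm A}
    (h : Prv Ax φ) : ∀ w, Sat M w φ := by
  induction h with
  | taut ht => exact fun w => sat_of_taut M w ht
  | ax ha => exact hax _ ha
  | k a φ ψ =>
    intro w
    rw [sat_imp]
    intro h1
    rw [sat_imp]
    intro h2 v hv
    exact (sat_imp M v φ ψ).1 (h1 v hv) (h2 v hv)
  | mp h1 h2 ih1 ih2 => exact fun w => (sat_imp M w _ _).1 (ih1 w) (ih2 w)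
  | nec a h ih => exact fun w v _ => ih v

lemma axB_valid (M : Kripke A W) (hsym : ∀ a, Symmetric (M.R a)) {χ : Fm A}
    (h : AxB χ) : ∀ w, Sat M w χ := by
  obtain ⟨a, φ, rfl⟩ := h
  intro w
  rw [sat_imp]
  intro hφ v hv
  exact (sat_dia M v a φ).2 ⟨w, hsym a hv, hφ⟩

lemma axD_valid (M : Kripke A W) (hser : ∀ a, Ser (M.R a)) {χ : Fm A}
    (h : AxD χ) : ∀ w, Sat M w χ := by
  obtain ⟨a, φ, rfl⟩ := h
  intro w
  rw [sat_imp]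
  intro hφ
  obtain ⟨v, hv⟩ := hser a w
  exact (sat_dia M w a φ).2 ⟨v, hv, hφ v hv⟩

lemma prv_mono {Ax Ax' : Fm A → Prop} (h : ∀ χ, Ax χ → Ax' χ) {φ : Fm A}
    (hp : Prv Ax φ) : Prv Ax' φ := by
  induction hp with
  | taut ht => exact .taut ht
  | ax ha => exact .ax (h _ ha)
  | k a φ ψ => exact .k a φ ψ
  | mp _ _ ih1 ih2 => exact ih1.mp ih2
  | nec a _ ih => exact ih.nec a

end S4x
namespace S4x
variable {A W : Type}

/-- The symmetric unraveling model. -/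
def UR (M : Kripke A W) : Kripke A (UWorld M) where
  R a s t := ((lastEntry s).1 = some a ∧ t.val = s.val.dropLast) ∨
    ((lastEntry s).1 ≠ some a ∧
      ∃ w', M.R a (lastEntry s).2 w' ∧ t.val = s.val ++ [(some a, w')])
  V n s := M.V n (lastEntry s).2

lemma getLast_mem_tail_or_head {l : List (Option A × W)} (h : l ≠ []) :
    l.getLast h ∈ l := List.getLast_mem h

lemma valid_extend {M : Kripke A W} (s : UWorld M) {a : A} {w' : W}
    (h1 : (lastEntry s).1 ≠ some a) (h2 : M.R a (lastEntry s).2 w') :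
    ValidSeq M (s.val ++ [(some a, w')]) := by
  obtain ⟨hne, ⟨w, hh⟩, htail, hch⟩ := s.prop
  refine ⟨by simp, ⟨w, ?_⟩, ?_, ?_⟩
  · rw [List.head?_append_of_ne_nil _ hne]; exact hh
  · intro x hx
    rcases List.mem_append.1 (by
        have : (s.val ++ [(some a, w')]).tail = s.val.tail ++ [(some a, w')] := by
          obtain ⟨y, l, hyl⟩ := List.exists_cons_of_ne_nil hne
          rw [hyl]; simp
        rw [this] at hx; exact hx) with h | h
    · exact htail x h
    · simp at h; subst h; simp
  · unfold List.Chain'; rw [List.isChain_append]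
    refine ⟨hch, List.isChain_singleton _, ?_⟩
    intro x hx y hy
    rw [List.getLast?_eq_getLast_of_ne_nil hne] at hx
    simp at hx hy
    subst hx; subst hy
    exact ⟨h1, a, rfl, h2⟩

lemma lastEntry_mk {M : Kripke A W} (l : List (Option A × W)) (h : ValidSeq M l) :
    lastEntry (⟨l, h⟩ : UWorld M) = l.getLast h.1 := rfl

lemma dropLast_ne_nil {M : Kripke A W} (s : UWorld M) (h : (lastEntry s).1 ≠ none) :
    s.val.dropLast ≠ [] := by
  obtain ⟨hne, ⟨w, hh⟩, htail, hch⟩ := s.prop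
  match hs : s.val with
  | [] => exact absurd hs hne
  | [x] =>
    exfalso
    apply h
    have hx : x = (none, w) := by rw [hs] at hh; simpa using hh
    have : lastEntry s = x := by
      show s.val.getLast _ = x
      simp [hs]
    rw [this, hx]
  | x :: y :: l => simp

lemma valid_dropLast {M : Kripke A W} (s : UWorld M) (hne : s.val.dropLast ≠ []) :
    ValidSeq M s.val.dropLast := by
  obtain ⟨hn, ⟨w, hh⟩, htail, hch⟩ := s.prop
  refine ⟨hne, ⟨w, ?_⟩, ?_, hch.prefix (List.dropLast_prefix _)⟩
  · match hs : s.val, hne with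
    | x :: y :: l, _ =>
      rw [hs] at hh
      simpa using hh
  · intro x hx
    refine htail x ?_
    match hs : s.val, hne with
    | x₀ :: y :: l, _ =>
      rw [hs] at hx
      simp only [List.dropLast_cons₂, List.tail_cons] at hx ⊢
      exact (List.dropLast_sublist (y :: l)).subset hx

lemma step_last {M : Kripke A W} (s : UWorld M) (hne : s.val.dropLast ≠ []) :
    Step M (s.val.dropLast.getLast hne) (lastEntry s) := by
  have hd := List.dropLast_append_getLast s.prop.1
  have hch : List.Chain' (Step M) (s.val.dropLast ++ [s.val.getLast s.prop.1]) := by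
    rw [hd]; exact s.prop.2.2.2
  unfold List.Chain' at hch; rw [List.isChain_append] at hch
  exact hch.2.2 _ (by rw [List.getLast?_eq_getLast_of_ne_nil hne]; rfl) _ rfl

lemma UR_unravel (M : Kripke A W) : IsAAUnraveling M (UR M) := by
  constructor
  · intro b s hs t
    constructor
    · rintro (⟨h, _⟩ | ⟨_, hw⟩)
      · exact absurd h hs
      · exact hw
    · intro hw; exact Or.inr ⟨hs, hw⟩
  · intro n s; exact Iff.rfl

lemma UR_back (M : Kripke A W) (a : A) (s t : UWorld M) (h : (lastEntry s).1 = some a) :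
    ((UR M).R a s t ↔ t.val = s.val.dropLast) := by
  constructor
  · rintro (⟨_, hw⟩ | ⟨hn, _⟩)
    · exact hw
    · exact absurd h hn
  · intro hw; exact Or.inl ⟨h, hw⟩

lemma UR_symm (M : Kripke A W) (a : A) : Symmetric ((UR M).R a) := by
  rintro s t (⟨h1, ht⟩ | ⟨h1, w', hR, ht⟩)
  · -- backward step; show forward from t
    have hdne : s.val.dropLast ≠ [] := by rw [← ht]; exact t.prop.1
    have hlt : lastEntry t = s.val.dropLast.getLast hdne := by
      show t.val.getLast _ = _
      congr 1
    have hstep := step_last s hdne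
    rw [← hlt] at hstep
    obtain ⟨hne', b, hb, hRb⟩ := hstep
    rw [h1] at hne' hb
    have hba : b = a := Option.some_injective _ hb.symm
    subst hba
    refine Or.inr ⟨hne', (lastEntry s).2, hRb, ?_⟩
    have hpair : (some b, (lastEntry s).2) = lastEntry s := by rw [← h1]
    rw [hpair, ht]
    exact (List.dropLast_append_getLast s.prop.1).symm
  · -- forward step; show backward from t
    have hlt : lastEntry t = (some a, w') := by
      show t.val.getLast _ = _
      have : t.val.getLast t.prop.1 = (s.val ++ [(some a, w')]).getLast (by simp) := by
        congr 1
      rw [this, List.getLast_concat]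
    refine Or.inl ⟨by rw [hlt], ?_⟩
    rw [ht, List.dropLast_concat]

lemma UR_serial (M : Kripke A W) (hser : ∀ a, Ser (M.R a)) (a : A) :
    Ser ((UR M).R a) := by
  intro s
  by_cases h : (lastEntry s).1 = some a
  · have hdne : s.val.dropLast ≠ [] := dropLast_ne_nil s (by rw [h]; simp)
    exact ⟨⟨s.val.dropLast, valid_dropLast s hdne⟩, Or.inl ⟨h, rfl⟩⟩
  · obtain ⟨w', hw'⟩ := hser a (lastEntry s).2
    exact ⟨⟨s.val ++ [(some a, w')], valid_extend s h hw'⟩, Or.inr ⟨h, w', hw', rfl⟩⟩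

lemma PFam_AA (M : Kripke A W) : IsAAFamily M (UR M) (PFam M) := by
  intro o u s hf
  have h1 : (lastEntry s).1 = o := by rw [hf]
  have h2 : (lastEntry s).2 = u := by rw [hf]
  constructor
  · intro n; show M.V n u ↔ M.V n (lastEntry s).2; rw [h2]
  · intro b hb
    constructor
    · intro u' hR
      refine ⟨⟨s.val ++ [(some b, u')], valid_extend s (by rw [h1]; exact hb) (by rw [h2]; exact hR)⟩,
        Or.inr ⟨by rw [h1]; exact hb, u', by rw [h2]; exact hR, rfl⟩, ?_⟩
      show lastEntry _ = _
      rw [lastEntry_mk, List.getLast_concat]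
    · rintro t (⟨hc, _⟩ | ⟨_, w', hR, hw⟩)
      · rw [h1] at hc; exact absurd hc hb
      · refine ⟨w', by rw [← h2]; exact hR, ?_⟩
        show lastEntry t = _
        show t.val.getLast _ = _
        have : t.val.getLast t.prop.1 = (s.val ++ [(some b, w')]).getLast (by simp) := by
          congr 1
        rw [this, List.getLast_concat]

lemma lminus_invariant {W2 : Type} {M : Kripke A W} {N : Kripke A W2}
    {f : Option A → W → W2 → Prop} (hf : IsAAFamily M N f) {a : A} {φ : Fm A}
    (h : LMinus a φ) :
    ∀ (o : Option A), (∀ b, o = some b → b = a) → ∀ u v, f o u v →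
      (Sat M u φ ↔ Sat N v φ) := by
  induction h with
  | atom a n => intro o ho u v hfo; exact (hf o u v hfo).1 n
  | @box a x ψ hx hψ ih =>
    intro o ho u v hfo
    have hob : o ≠ some x := fun h => hx (ho x h)
    obtain ⟨fwd, bwd⟩ := (hf o u v hfo).2 x hob
    constructor
    · intro hs v' hN
      obtain ⟨u', hMu, hf'⟩ := bwd v' hN
      exact (ih (some x) (fun b hb => (Option.some_injective _ hb).symm) u' v' hf').1 (hs u' hMu)
    · intro hs u' hM
      obtain ⟨v', hNv, hf'⟩ := fwd u' hM
      exact (ih (some x) (fun b hb => (Option.some_injective _ hb).symm) u' v' hf').2 (hs v' hNv)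
  | @neg a φ hφ ih =>
    intro o ho u v hfo
    exact not_congr (ih o ho u v hfo)
  | @and a φ ψ hφ hψ ih1 ih2 =>
    intro o ho u v hfo
    exact and_congr (ih1 o ho u v hfo) (ih2 o ho u v hfo)

lemma lalt_invariant {W2 : Type} {M : Kripke A W} {N : Kripke A W2}
    {f : Option A → W → W2 → Prop} (hf : IsAAFamily M N f) {φ : Fm A}
    (h : LAlt φ) : ∀ u v, f none u v → (Sat M u φ ↔ Sat N v φ) := by
  induction h with
  | atom n => intro u v hfo; exact (hf none u v hfo).1 n
  | chi a hφ => exact fun u v hfo => lminus_invariant hf hφ none (by simp) u v hfo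
  | neg _ ih => intro u v hfo; exact not_congr (ih u v hfo)
  | and _ _ ih1 ih2 => intro u v hfo; exact and_congr (ih1 u v hfo) (ih2 u v hfo)

def root (M : Kripke A W) (w : W) : UWorld M :=
  ⟨[(none, w)], by
    refine ⟨by simp, ⟨w, rfl⟩, ?_, ?_⟩
    · intro x hx; cases hx
    · exact List.isChain_singleton _⟩

lemma root_pfam (M : Kripke A W) (w : W) : PFam M none w (root M w) := rfl

lemma sat_transfer {M : Kripke A W} {φ : Fm A} (h : LAlt φ) (w : W) :
    Sat M w φ ↔ Sat (UR M) (root M w) φ :=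
  lalt_invariant (PFam_AA M) h w (root M w) (root_pfam M w)

end S4x

set_option linter.unusedVariables false in
open S4x in
/-- satisfiable agent-alternating formulas are satisfiable on symmetric models;
in particular via the unraveling with R_a(s) = {s minus its last element}; hence K = KB and
KD = KDB on agent-alternating formulas. -/
theorem stmt4 {A : Type} (hA : ∃ a b : A, a ≠ b) :
    (∀ (φ : Fm A), LAlt φ →
      (∃ (W : Type) (M : Kripke A W) (w : W), Sat M w φ) →
      ∃ (W' : Type) (M' : Kripke A W') (w' : W'),
        (∀ a : A, Symmetric (M'.R a)) ∧ Sat M' w' φ) ∧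
    (∀ (W : Type) (M : Kripke A W), ∃ N : Kripke A (UWorld M),
      IsAAUnraveling M N ∧
      (∀ (a : A) (s t : UWorld M), (lastEntry s).1 = some a →
        (N.R a s t ↔ t.val = s.val.dropLast)) ∧
      (∀ a : A, Symmetric (N.R a))) ∧
    (∀ φ : Fm A, LAlt φ → (Prv AxNone φ ↔ Prv AxB φ)) ∧
    (∀ φ : Fm A, LAlt φ → (Prv AxD φ ↔ Prv (fun χ => AxD χ ∨ AxB χ) φ)) := by 
  refine ⟨?_, ?_, ?_, ?_⟩
  · rintro φ hφ ⟨W, M, w, hw⟩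
    exact ⟨UWorld M, UR M, root M w, UR_symm M, (sat_transfer hφ w).1 hw⟩
  · intro W M
    exact ⟨UR M, UR_unravel M, UR_back M, UR_symm M⟩
  · intro φ hφ
    constructor
    · exact prv_mono (fun χ h => h.elim)
    · intro h
      by_contra hn
      obtain ⟨Γ, hΓ⟩ := exists_countermodel (Ax := (AxNone : Fm A → Prop)) hn
      exact hΓ ((sat_transfer hφ Γ).2
        (soundness (UR (CanM AxNone))
          (fun χ hχ => axB_valid _ (UR_symm _) hχ) h (root (CanM AxNone) Γ)))
  · intro φ hφ
    constructor
    · exact prv_mono (fun χ h => Or.inl h)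
    · intro h
      by_contra hn
      obtain ⟨Γ, hΓ⟩ := exists_countermodel (Ax := (AxD : Fm A → Prop)) hn
      refine hΓ ((sat_transfer hφ Γ).2
        (soundness (UR (CanM AxD)) ?_ h (root (CanM AxD) Γ)))
      rintro χ (hχ | hχ)
      · exact axD_valid _ (UR_serial _ (canM_serial (fun χ h => h))) hχ
      · exact axB_valid _ (UR_symm _) hχ
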